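/- Let v ∈ ℝ² be nonzero, let w ∈ ℝ² be a nonzero vector of rational slope satisfying |w| ≥ 2·|v|·h(w), let T > 0, and let γ ∈ SL(2,ℤ) with ‖γ‖ ≤ T. Then |γ·v − w| ≥ |w|/(2·h(w)·T). -/

import Mathlib

open Matrix MeasureTheory Filter Topology

noncomputable section

abbrev SL2Z := Matrix.SpecialLinearGroup (Fin 2) ℤ

/-- The real matrix associated to an element of `SL(2,ℤ)`. -/
def toR (γ : SL2Z) : Matrix (Fin 2) (Fin 2) ℝ :=
  (γ : Matrix (Fin 2) (Fin 2) ℤ).map (Int.cast)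

/-- The Euclidean plane. -/
abbrev E2 := EuclideanSpace ℝ (Fin 2)

/-- The vector of `ℝ²` with coordinates `a`, `b`. -/
def vec (a b : ℝ) : E2 := (WithLp.equiv 2 (Fin 2 → ℝ)).symm ![a, b]

/-- The action of `SL(2,ℤ)` on `ℝ²` by matrix-vector multiplication. -/
def act (γ : SL2Z) (v : E2) : E2 :=
  (WithLp.equiv 2 (Fin 2 → ℝ)).symm ((toR γ).mulVec (WithLp.equiv 2 (Fin 2 → ℝ) v))

/-- The Frobenius (euclidean) norm of a 2×2 real matrix. -/
def frobNorm (A : Matrix (Fin 2) (Fin 2) ℝ) : ℝ := Real.sqrt (∑ i, ∑ j, (A i j) ^ 2)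

/-- A vector of `ℝ²` is primitive if its coordinates are coprime integers. -/
def IsPrimitive (v : E2) : Prop := ∃ p q : ℤ, Int.gcd p q = 1 ∧ v 0 = p ∧ v 1 = q

/-- The set of points of rational slope and period `ρ`: points `v` such that `√ρ • v`
is primitive. -/
def P (ρ : ℝ) : Set E2 := {v | IsPrimitive (Real.sqrt ρ • v)}

/-- The spectrum of periods of `v`: the euclidean distance from `v` to `P ρ`. -/
def Dv (v : E2) (ρ : ℝ) : ℝ := Metric.infDist v (P ρ)

lemma norm_E2 (u : E2) : ‖u‖ = Real.sqrt (u 0 ^ 2 + u 1 ^ 2) := by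
  rw [EuclideanSpace.norm_eq]
  simp [Fin.sum_univ_two, sq_abs]

lemma act_apply (γ : SL2Z) (u : E2) (i : Fin 2) :
    act γ u i = toR γ i 0 * u 0 + toR γ i 1 * u 1 := by
  simp [act, Matrix.mulVec, dotProduct, Fin.sum_univ_two]
  fin_cases i <;> simp

lemma act_norm_le (γ : SL2Z) (u : E2) : ‖act γ u‖ ≤ frobNorm (toR γ) * ‖u‖ := by
  set A := toR γ
  have hF : 0 ≤ ∑ i, ∑ j, (A i j) ^ 2 := by positivity
  rw [norm_E2, norm_E2, frobNorm, ← Real.sqrt_mul hF]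
  apply Real.sqrt_le_sqrt
  rw [act_apply, act_apply]
  simp only [Fin.sum_univ_two]
  nlinarith [sq_nonneg (A 0 0 * u 1 - A 0 1 * u 0), sq_nonneg (A 1 0 * u 1 - A 1 1 * u 0)]

lemma toR_mul (γ δ : SL2Z) : toR (γ * δ) = toR γ * toR δ := by
  simp only [toR, Matrix.SpecialLinearGroup.coe_mul]
  exact Matrix.map_mul (f := Int.castRingHom ℝ)

lemma act_act (γ δ : SL2Z) (u : E2) : act γ (act δ u) = act (γ * δ) u := by
  simp only [act, Equiv.apply_symm_apply, Matrix.mulVec_mulVec, toR_mul]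

lemma act_one (u : E2) : act 1 u = u := by
  simp [act, toR]

lemma act_sub (γ : SL2Z) (a b : E2) : act γ (a - b) = act γ a - act γ b := by
  ext i
  simp only [PiLp.sub_apply, act_apply]
  ring

lemma act_smul (γ : SL2Z) (c : ℝ) (a : E2) : act γ (c • a) = c • act γ a := by
  ext i
  simp only [PiLp.smul_apply, act_apply, smul_eq_mul]
  ring

lemma frob_inv (γ : SL2Z) : frobNorm (toR γ⁻¹) = frobNorm (toR γ) := by
  simp only [frobNorm, toR, Fin.sum_univ_two, Matrix.SpecialLinearGroup.coe_inv,
    Matrix.adjugate_fin_two]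
  simp [Matrix.map_apply]
  ring_nf

lemma vec_zero (a b : ℝ) : vec a b 0 = a := rfl
lemma vec_one (a b : ℝ) : vec a b 1 = b := rfl

/-- If `w = t·(p,q)` is a nonzero vector of rational slope of height
`h(w) = √(p²+q²)` with `|w| ≥ 2·|v|·h(w)`, and `γ ∈ SL(2,ℤ)` has norm at most `T`,
then `|γ·v − w| ≥ |w|/(2·h(w)·T)`. -/
theorem gap_around_rational_simple (v : E2) (hv : v ≠ 0) (t : ℝ) (ht : t ≠ 0) (p q : ℤ)
    (hpq : Int.gcd p q = 1) (w : E2) (hw : w = t • vec (p : ℝ) (q : ℝ))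
    (hbig : 2 * ‖v‖ * Real.sqrt ((p : ℝ) ^ 2 + (q : ℝ) ^ 2) ≤ ‖w‖)
    (T : ℝ) (hT : 0 < T) (γ : SL2Z) (hγ : frobNorm (toR γ) ≤ T) :
    ‖w‖ / (2 * Real.sqrt ((p : ℝ) ^ 2 + (q : ℝ) ^ 2) * T) ≤ dist (act γ v) w := by
  set h : ℝ := Real.sqrt ((p : ℝ) ^ 2 + (q : ℝ) ^ 2) with hh
  -- h ≥ 1
  have hpq1 : (1 : ℝ) ≤ (p : ℝ) ^ 2 + (q : ℝ) ^ 2 := by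
    have : p ≠ 0 ∨ q ≠ 0 := by
      by_contra hc
      push_neg at hc
      simp [hc.1, hc.2] at hpq
    have : (1 : ℤ) ≤ p ^ 2 + q ^ 2 := by
      rcases this with h0 | h0
      · nlinarith [sq_nonneg q, Int.one_le_abs h0, sq_abs p, sq_nonneg (|p| - 1)]
      · nlinarith [sq_nonneg p, Int.one_le_abs h0, sq_abs q, sq_nonneg (|q| - 1)]
    exact_mod_cast this
  have h1 : (1 : ℝ) ≤ h := by
    rw [hh, show (1:ℝ) = Real.sqrt 1 by simp]
    exact Real.sqrt_le_sqrt hpq1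
  have hpos : (0 : ℝ) < h := lt_of_lt_of_le one_pos h1
  -- ‖w‖ = |t| * h
  have hnw : ‖w‖ = |t| * h := by
    rw [hw, norm_smul, norm_E2, vec_zero, vec_one, Real.norm_eq_abs, hh]
  -- ‖v‖ ≤ |t| / 2
  have hvle : ‖v‖ ≤ |t| / 2 := by
    rw [hnw] at hbig
    nlinarith
  -- the integer vector m = γ⁻¹ · (p, q)
  set δ : SL2Z := γ⁻¹ with hδ
  set m : Fin 2 → ℤ := (δ : Matrix (Fin 2) (Fin 2) ℤ).mulVec ![p, q] with hm
  have hrec : (γ : Matrix (Fin 2) (Fin 2) ℤ).mulVec m = ![p, q] := by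
    rw [hm, Matrix.mulVec_mulVec, ← Matrix.SpecialLinearGroup.coe_mul, hδ,
      mul_inv_cancel]
    simp
  have hmne : m ≠ 0 := by
    intro h0
    rw [h0, Matrix.mulVec_zero] at hrec
    have hp0 : p = 0 := by
      have := congrFun hrec 0
      simpa using this.symm
    have hq0 : q = 0 := by
      have := congrFun hrec 1
      simpa using this.symm
    simp [hp0, hq0] at hpq
  have hm1 : (1 : ℝ) ≤ (m 0 : ℝ) ^ 2 + (m 1 : ℝ) ^ 2 := by
    have : m 0 ≠ 0 ∨ m 1 ≠ 0 := by
      by_contra hc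
      push_neg at hc
      apply hmne
      funext i
      fin_cases i <;> simp [hc.1, hc.2]
    have : (1 : ℤ) ≤ (m 0) ^ 2 + (m 1) ^ 2 := by
      rcases this with h0 | h0
      · nlinarith [sq_nonneg (m 1), Int.one_le_abs h0, sq_abs (m 0), sq_nonneg (|m 0| - 1)]
      · nlinarith [sq_nonneg (m 0), Int.one_le_abs h0, sq_abs (m 1), sq_nonneg (|m 1| - 1)]
    exact_mod_cast this
  -- act δ (vec p q) has coordinates m
  have hcoord : ∀ i, act δ (vec (p : ℝ) (q : ℝ)) i = (m i : ℝ) := by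
    intro i
    rw [act_apply, vec_zero, vec_one, hm]
    simp [Matrix.mulVec, dotProduct, Fin.sum_univ_two, toR, Matrix.map_apply]
  have hnmacts : (1 : ℝ) ≤ ‖act δ (vec (p : ℝ) (q : ℝ))‖ := by
    rw [norm_E2, hcoord 0, hcoord 1,
      show (1:ℝ) = Real.sqrt 1 by simp]
    exact Real.sqrt_le_sqrt hm1
  -- ‖act δ w‖ ≥ |t|
  have hnδw : |t| ≤ ‖act δ w‖ := by
    rw [hw, act_smul, norm_smul, Real.norm_eq_abs]
    nlinarith [abs_nonneg t]
  -- act δ (act γ v - w) = v - act δ w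
  have hkey : act δ (act γ v - w) = v - act δ w := by
    rw [act_sub, act_act, hδ, inv_mul_cancel, act_one]
  -- lower bound on ‖v - act δ w‖
  have hlow : |t| / 2 ≤ ‖v - act δ w‖ := by
    have := norm_sub_norm_le (act δ w) v
    have h2 : ‖act δ w - v‖ = ‖v - act δ w‖ := norm_sub_rev _ _
    linarith
  -- upper bound
  have hup : ‖act δ (act γ v - w)‖ ≤ T * ‖act γ v - w‖ := by
    calc ‖act δ (act γ v - w)‖ ≤ frobNorm (toR δ) * ‖act γ v - w‖ := act_norm_le δ _
    _ ≤ T * ‖act γ v - w‖ := by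
        apply mul_le_mul_of_nonneg_right _ (norm_nonneg _)
        rw [hδ, frob_inv]; exact hγ
  rw [hkey] at hup
  have hd : dist (act γ v) w = ‖act γ v - w‖ := dist_eq_norm _ _
  rw [hd, hnw]
  rw [div_le_iff₀ (by positivity)]
  have ht2 : |t| / 2 ≤ T * ‖act γ v - w‖ := le_trans hlow hup
  have hne : h ≠ 0 := ne_of_gt hpos
  nlinarith [hpos, hT.le, norm_nonneg (act γ v - w)]
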